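/- For n ≥ 3, the binomial ideal L_n := ⟨x_i y_j - x_j y_i : 1 ≤ i < j ≤ n⟩ + ⟨x_i z_j x_k - z_i x_j x_k, y_i z_j y_k - z_i y_j y_k, y_i z_j x_k - z_i y_j x_k : 1 ≤ i < j < k ≤ n⟩ equals the intersection I_3 ∩ I_4 ∩ ... ∩ I_{n+1}, where I_t := ⟨x_i, y_i : t ≤ i ≤ n⟩ + ⟨x_i y_j - x_j y_i : 1 ≤ i < j < t⟩ + ⟨x_i z_j - x_j z_i, y_i z_j - y_j z_i : 1 ≤ i < j < t-1⟩. -/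

import Mathlib

open MvPolynomial

noncomputable section

variable (K : Type*) [Field K] [IsAlgClosed K] (n : ℕ)

/-- The variable `x_i` (indices `i : Fin n` correspond to `i+1 ∈ {1,…,n}`). -/
def Xv (i : Fin n) : MvPolynomial (Fin n × Fin 3) K := MvPolynomial.X (i, 0)
/-- The variable `y_i`. -/
def Yv (i : Fin n) : MvPolynomial (Fin n × Fin 3) K := MvPolynomial.X (i, 1)
/-- The variable `z_i`. -/
def Zv (i : Fin n) : MvPolynomial (Fin n × Fin 3) K := MvPolynomial.X (i, 2)

/-- The binomial ideal `L_n`. -/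
def Lideal : Ideal (MvPolynomial (Fin n × Fin 3) K) :=
  Ideal.span ({p | ∃ i j : Fin n, i < j ∧ p = Xv K n i * Yv K n j - Xv K n j * Yv K n i} ∪
    {p | ∃ i j k : Fin n, i < j ∧ j < k ∧
      p = Xv K n i * Zv K n j * Xv K n k - Zv K n i * Xv K n j * Xv K n k} ∪
    {p | ∃ i j k : Fin n, i < j ∧ j < k ∧
      p = Yv K n i * Zv K n j * Yv K n k - Zv K n i * Yv K n j * Yv K n k} ∪
    {p | ∃ i j k : Fin n, i < j ∧ j < k ∧
      p = Yv K n i * Zv K n j * Xv K n k - Zv K n i * Yv K n j * Xv K n k})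

/-- The prime component `I_t`, for `3 ≤ t ≤ n+1` (indices are 1-based:
the variable of index `i : Fin n` is the paper's index `i+1`). -/
def Iideal (t : ℕ) : Ideal (MvPolynomial (Fin n × Fin 3) K) :=
  Ideal.span ({p | ∃ i : Fin n, t ≤ (i : ℕ) + 1 ∧ (p = Xv K n i ∨ p = Yv K n i)} ∪
    {p | ∃ i j : Fin n, i < j ∧ (j : ℕ) + 1 < t ∧
      p = Xv K n i * Yv K n j - Xv K n j * Yv K n i} ∪
    {p | ∃ i j : Fin n, i < j ∧ (j : ℕ) + 1 < t - 1 ∧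
      (p = Xv K n i * Zv K n j - Xv K n j * Zv K n i ∨
       p = Yv K n i * Zv K n j - Yv K n j * Zv K n i)})

namespace Stmt4Aux

open scoped Classical

variable {K : Type*} [Field K] {n : ℕ}

abbrev E (n : ℕ) := (Fin n × Fin 3) →₀ ℕ

def ex (i : Fin n) : E n := Finsupp.single (i, (0 : Fin 3)) 1
def ey (i : Fin n) : E n := Finsupp.single (i, (1 : Fin 3)) 1
def ez (i : Fin n) : E n := Finsupp.single (i, (2 : Fin 3)) 1

def Xm (e : E n) : MvPolynomial (Fin n × Fin 3) K := MvPolynomial.monomial e 1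

lemma Xm_mul (a b : E n) : (Xm a : MvPolynomial (Fin n × Fin 3) K) * Xm b = Xm (a + b) := by
  simp [Xm, MvPolynomial.monomial_mul]

lemma Xm_single (s : Fin n × Fin 3) :
    (Xm (Finsupp.single s 1) : MvPolynomial (Fin n × Fin 3) K) = MvPolynomial.X s := by
  rw [Xm, ← MvPolynomial.X_pow_eq_monomial, pow_one]

/-- xy-degree of a column. -/
def xyd (e : E n) (c : Fin n) : ℕ := e (c, 0) + e (c, 1)

lemma xyd_add (u v : E n) (c : Fin n) : xyd (u + v) c = xyd u c + xyd v c := by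
  simp [xyd, Finsupp.add_apply]; ring

lemma xyd_ex (i c : Fin n) : xyd (ex i) c = if c = i then 1 else 0 := by
  simp [xyd, ex, Finsupp.single_apply, Prod.ext_iff]
  split_ifs with h h2 h3 <;> simp_all

lemma xyd_ey (i c : Fin n) : xyd (ey i) c = if c = i then 1 else 0 := by
  simp [xyd, ey, Finsupp.single_apply, Prod.ext_iff]
  split_ifs with h h2 h3 <;> simp_all

lemma xyd_ez (i c : Fin n) : xyd (ez i) c = 0 := by
  simp [xyd, ez, Finsupp.single_apply, Prod.ext_iff]

lemma exists_add_single {u : E n} {a : Fin n × Fin 3} (h : u a ≠ 0) :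
    ∃ u' : E n, u = u' + Finsupp.single a 1 := by
  refine ⟨u - Finsupp.single a 1, ?_⟩
  ext b
  rw [Finsupp.add_apply, Finsupp.tsub_apply]
  rcases eq_or_ne b a with rfl | hb
  · simp only [Finsupp.single_apply, if_pos rfl, if_true]
    omega
  · simp [Finsupp.single_apply, Ne.symm hb]


/-- Moves generating the congruence of `L`. -/
inductive Lmove : E n → E n → Prop
  | xy (e1 e2 u : E n) (i j : Fin n) (hij : i < j)
      (h1 : e1 = u + ex i + ey j) (h2 : e2 = u + ex j + ey i) : Lmove e1 e2
  | xzx (e1 e2 u : E n) (i j k : Fin n) (hij : i < j) (hjk : j < k)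
      (h1 : e1 = u + ex i + ez j + ex k) (h2 : e2 = u + ez i + ex j + ex k) : Lmove e1 e2
  | yzy (e1 e2 u : E n) (i j k : Fin n) (hij : i < j) (hjk : j < k)
      (h1 : e1 = u + ey i + ez j + ey k) (h2 : e2 = u + ez i + ey j + ey k) : Lmove e1 e2
  | yzx (e1 e2 u : E n) (i j k : Fin n) (hij : i < j) (hjk : j < k)
      (h1 : e1 = u + ey i + ez j + ex k) (h2 : e2 = u + ez i + ey j + ex k) : Lmove e1 e2

/-- Moves generating the congruence of `I_t`. -/
inductive Imove (t : ℕ) : E n → E n → Prop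
  | xy (e1 e2 u : E n) (i j : Fin n) (hij : i < j) (hj : (j : ℕ) + 1 < t)
      (h1 : e1 = u + ex i + ey j) (h2 : e2 = u + ex j + ey i) : Imove t e1 e2
  | xz (e1 e2 u : E n) (i j : Fin n) (hij : i < j) (hj : (j : ℕ) + 1 < t - 1)
      (h1 : e1 = u + ex i + ez j) (h2 : e2 = u + ex j + ez i) : Imove t e1 e2
  | yz (e1 e2 u : E n) (i j : Fin n) (hij : i < j) (hj : (j : ℕ) + 1 < t - 1)
      (h1 : e1 = u + ey i + ez j) (h2 : e2 = u + ey j + ez i) : Imove t e1 e2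

/-- Generic: equivalence generated by moves whose associated binomials lie in `I`
gives binomials in `I`. -/
lemma sub_mem_of_eqvGen {R : E n → E n → Prop} {I : Ideal (MvPolynomial (Fin n × Fin 3) K)}
    (h : ∀ a b, R a b → (Xm a : MvPolynomial (Fin n × Fin 3) K) - Xm b ∈ I)
    {a b : E n} (hab : Relation.EqvGen R a b) :
    (Xm a : MvPolynomial (Fin n × Fin 3) K) - Xm b ∈ I := by
  induction hab with
  | rel a b h' => exact h a b h'
  | refl a => simpa using I.zero_mem
  | symm a b _ ih => simpa using I.neg_mem ih
  | trans a b c _ _ ih1 ih2 => simpa using I.add_mem ih1 ih2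

/-- Generic transport of an invariant along the generated equivalence. -/
lemma eqvGen_iff_inv {R : E n → E n → Prop} {inv : E n → Prop}
    (hiff : ∀ a b, R a b → (inv a ↔ inv b)) {a b : E n}
    (hab : Relation.EqvGen R a b) : inv a ↔ inv b := by
  induction hab with
  | rel a b h' => exact hiff a b h'
  | refl a => rfl
  | symm a b _ ih => exact ih.symm
  | trans a b c _ _ ih1 ih2 => exact ih1.trans ih2

/-- Generic: mapping one generated equivalence into another, under an invariant. -/
lemma eqvGen_map_inv {R R' : E n → E n → Prop} {inv : E n → Prop}
    (hiff : ∀ a b, R a b → (inv a ↔ inv b))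
    (hmap : ∀ a b, R a b → inv a → Relation.EqvGen R' a b)
    {a b : E n} (hab : Relation.EqvGen R a b) (ha : inv a) : Relation.EqvGen R' a b := by
  suffices H : (inv a ↔ inv b) ∧ (inv a → Relation.EqvGen R' a b) from H.2 ha
  clear ha
  induction hab with
  | rel a b h' => exact ⟨hiff a b h', hmap a b h'⟩
  | refl a => exact ⟨Iff.rfl, fun _ => Relation.EqvGen.refl a⟩
  | symm a b _ ih =>
      exact ⟨ih.1.symm, fun hb => Relation.EqvGen.symm _ _ (ih.2 (ih.1.mpr hb))⟩
  | trans a b c _ _ ih1 ih2 =>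
      exact ⟨ih1.1.trans ih2.1,
        fun ha => Relation.EqvGen.trans _ _ _ (ih1.2 ha) (ih2.2 (ih1.1.mp ha))⟩

/-- Generic: if no move touches a monomial satisfying `inv`, its class is a singleton. -/
lemma eqvGen_singleton {R : E n → E n → Prop} {inv : E n → Prop}
    (h1 : ∀ a b, R a b → ¬ inv a) (h2 : ∀ a b, R a b → ¬ inv b)
    {a b : E n} (hab : Relation.EqvGen R a b) (ha : inv a) : a = b := by
  suffices H : (inv a → a = b) ∧ (inv b → b = a) from H.1 ha
  clear ha
  induction hab with
  | rel a b h' => exact ⟨fun ha => absurd ha (h1 a b h'), fun hb => absurd hb (h2 a b h')⟩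
  | refl a => exact ⟨fun _ => rfl, fun _ => rfl⟩
  | symm a b _ ih => exact ⟨ih.2, ih.1⟩
  | trans a b c _ _ ih1 ih2 =>
      constructor
      · intro ha; have e1 := ih1.1 ha; subst e1; exact ih2.1 ha
      · intro hc; have e2 := ih2.2 hc; subst e2; exact ih1.2 hc

section Phi

variable (P : E n → Prop)

/-- Sum of coefficients over exponents satisfying `P`, as an additive hom. -/
def phiH : MvPolynomial (Fin n × Fin 3) K →+ K where
  toFun f := (AddMonoidAlgebra.coeff f).sum fun e c => if P e then c else 0
  map_zero' := by simp
  map_add' f g := by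
    rw [show AddMonoidAlgebra.coeff (f + g) = AddMonoidAlgebra.coeff f + AddMonoidAlgebra.coeff g
      from rfl]
    apply Finsupp.sum_add_index' (fun e => by simp)
    intro e c1 c2
    split_ifs <;> simp

lemma phiH_monomial (e : E n) (c : K) :
    phiH P (MvPolynomial.monomial e c) = if P e then c else 0 := by
  classical
  have : AddMonoidAlgebra.coeff (MvPolynomial.monomial e c : MvPolynomial (Fin n × Fin 3) K) =
      Finsupp.single e c :=
    rfl
  show (AddMonoidAlgebra.coeff (MvPolynomial.monomial e c : MvPolynomial (Fin n × Fin 3) K)).sum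
    (fun e c => if P e then c else 0) = _
  simp only [AddMonoidHom.coe_mk, ZeroHom.coe_mk, this]
  rw [Finsupp.sum_single_index]
  simp

lemma phiH_eq_sum_filter (f : MvPolynomial (Fin n × Fin 3) K) :
    phiH P f = ∑ e ∈ f.support.filter P, MvPolynomial.coeff e f := by
  show (AddMonoidAlgebra.coeff f).sum (fun e c => if P e then c else 0) = _
  rw [Finsupp.sum, Finset.sum_filter]
  rfl

lemma phiH_mul_zero {g : MvPolynomial (Fin n × Fin 3) K}
    (h : ∀ (u : E n) (c : K), phiH P (MvPolynomial.monomial u c * g) = 0)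
    (q : MvPolynomial (Fin n × Fin 3) K) : phiH P (q * g) = 0 := by
  conv_lhs => rw [q.as_sum, Finset.sum_mul]
  rw [map_sum]
  exact Finset.sum_eq_zero fun u _ => h u _

lemma phiH_span_zero {S : Set (MvPolynomial (Fin n × Fin 3) K)}
    (hS : ∀ g ∈ S, ∀ (u : E n) (c : K), phiH P (MvPolynomial.monomial u c * g) = 0)
    {f : MvPolynomial (Fin n × Fin 3) K} (hf : f ∈ Ideal.span S) : phiH P f = 0 := by
  have main : ∀ q, phiH P (q * f) = 0 := by
    refine Submodule.span_induction
      (p := fun x _ => ∀ q, phiH P (q * x) = 0) ?_ ?_ ?_ ?_ hf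
    · intro x hx q; exact phiH_mul_zero P (hS x hx) q
    · intro q; simp
    · intro x y _ _ hx hy q; rw [mul_add, map_add, hx, hy, add_zero]
    · intro a x _ hx q
      rw [smul_eq_mul, ← mul_assoc]
      exact hx (q * a)
  simpa using main 1

end Phi


section Prod
variable (K n)

lemma Xv_eq (i : Fin n) : Xv K n i = Xm (ex i) := (Xm_single _).symm
lemma Yv_eq (i : Fin n) : Yv K n i = Xm (ey i) := (Xm_single _).symm
lemma Zv_eq (i : Fin n) : Zv K n i = Xm (ez i) := (Xm_single _).symm

lemma XY_eq (i j : Fin n) : Xv K n i * Yv K n j = Xm (ex i + ey j) := by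
  rw [Xv_eq, Yv_eq, Xm_mul]
lemma XZ_eq (i j : Fin n) : Xv K n i * Zv K n j = Xm (ex i + ez j) := by
  rw [Xv_eq, Zv_eq, Xm_mul]
lemma YZ_eq (i j : Fin n) : Yv K n i * Zv K n j = Xm (ey i + ez j) := by
  rw [Yv_eq, Zv_eq, Xm_mul]

end Prod

lemma Lmove.sub_mem {a b : E n} (h : Lmove a b) :
    (Xm a : MvPolynomial (Fin n × Fin 3) K) - Xm b ∈ Lideal K n := by
  cases h with
  | xy u i j hij h1 h2 =>
      subst h1; subst h2
      have hg : Xv K n i * Yv K n j - Xv K n j * Yv K n i ∈ Lideal K n := by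
        apply Ideal.subset_span
        simp only [Set.mem_union, Set.mem_setOf_eq]
        exact Or.inl (Or.inl (Or.inl ⟨i, j, hij, rfl⟩))
      have h2 := Ideal.mul_mem_left _ (Xm u) hg
      convert h2 using 1
      simp only [← Xm_mul, ← Xv_eq, ← Yv_eq]
      ring
  | xzx u i j k hij hjk h1 h2 =>
      subst h1; subst h2
      have hg : Xv K n i * Zv K n j * Xv K n k - Zv K n i * Xv K n j * Xv K n k
          ∈ Lideal K n := by
        apply Ideal.subset_span
        simp only [Set.mem_union, Set.mem_setOf_eq]
        exact Or.inl (Or.inl (Or.inr ⟨i, j, k, hij, hjk, rfl⟩))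
      have h2 := Ideal.mul_mem_left _ (Xm u) hg
      convert h2 using 1
      simp only [← Xm_mul, ← Xv_eq, ← Yv_eq, ← Zv_eq]
      ring
  | yzy u i j k hij hjk h1 h2 =>
      subst h1; subst h2
      have hg : Yv K n i * Zv K n j * Yv K n k - Zv K n i * Yv K n j * Yv K n k
          ∈ Lideal K n := by
        apply Ideal.subset_span
        simp only [Set.mem_union, Set.mem_setOf_eq]
        exact Or.inl (Or.inr ⟨i, j, k, hij, hjk, rfl⟩)
      have h2 := Ideal.mul_mem_left _ (Xm u) hg
      convert h2 using 1
      simp only [← Xm_mul, ← Xv_eq, ← Yv_eq, ← Zv_eq]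
      ring
  | yzx u i j k hij hjk h1 h2 =>
      subst h1; subst h2
      have hg : Yv K n i * Zv K n j * Xv K n k - Zv K n i * Yv K n j * Xv K n k
          ∈ Lideal K n := by
        apply Ideal.subset_span
        simp only [Set.mem_union, Set.mem_setOf_eq]
        exact Or.inr ⟨i, j, k, hij, hjk, rfl⟩
      have h2 := Ideal.mul_mem_left _ (Xm u) hg
      convert h2 using 1
      simp only [← Xm_mul, ← Xv_eq, ← Yv_eq, ← Zv_eq]
      ring

/-- The invariant for the main case: no xy-weight above column `cM`,
positive xy-weight at column `cM`. -/
def PQ (cM : Fin n) (e : E n) : Prop :=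
  (∀ c : Fin n, (cM : ℕ) < (c : ℕ) → xyd e c = 0) ∧ 0 < xyd e cM

/-- Degenerate invariant: no xy-weight above column 0. -/
def R1 (e : E n) : Prop := ∀ c : Fin n, 0 < (c : ℕ) → xyd e c = 0

lemma xyd_xy_eq (u : E n) (i j c : Fin n) :
    xyd (u + ex i + ey j) c = xyd (u + ex j + ey i) c := by
  simp only [xyd_add, xyd_ex, xyd_ey]
  split_ifs <;> omega

lemma PQ_iff_of_eq {cM : Fin n} {E1 E2 : E n} (h : ∀ c : Fin n, (cM : ℕ) ≤ (c : ℕ) →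
    xyd E1 c = xyd E2 c) : PQ cM E1 ↔ PQ cM E2 := by
  unfold PQ
  constructor <;> rintro ⟨hP, hQ⟩
  · exact ⟨fun c hc => by rw [← h c (le_of_lt hc)]; exact hP c hc,
      by rw [← h cM le_rfl]; exact hQ⟩
  · exact ⟨fun c hc => by rw [h c (le_of_lt hc)]; exact hP c hc,
      by rw [h cM le_rfl]; exact hQ⟩

lemma cubic_PQ_iff {cM : Fin n} {u : E n} {i j k : Fin n}
    (hij : (i : ℕ) < (j : ℕ)) (hjk : (j : ℕ) < (k : ℕ)) {E1 E2 : E n}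
    (h1 : ∀ c : Fin n, xyd E1 c
      = xyd u c + ((if c = i then 1 else 0) + (if c = k then 1 else 0)))
    (h2 : ∀ c : Fin n, xyd E2 c
      = xyd u c + ((if c = j then 1 else 0) + (if c = k then 1 else 0))) :
    PQ cM E1 ↔ PQ cM E2 := by
  constructor <;> rintro ⟨hP, hQ⟩
  · have hk : (k : ℕ) ≤ (cM : ℕ) := by
      by_contra hk
      have h := hP k (by omega)
      rw [h1 k, if_pos rfl] at h
      omega
    refine ⟨fun c hc => ?_, ?_⟩
    · have hci : c ≠ i := Fin.ne_of_val_ne (by omega)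
      have hcj : c ≠ j := Fin.ne_of_val_ne (by omega)
      have hck : c ≠ k := Fin.ne_of_val_ne (by omega)
      have h := hP c hc
      rw [h1 c] at h
      rw [h2 c]
      simp only [if_neg hci, if_neg hcj, if_neg hck] at h ⊢
      omega
    · have hMi : cM ≠ i := Fin.ne_of_val_ne (by omega)
      have hMj : cM ≠ j := Fin.ne_of_val_ne (by omega)
      rw [h1 cM] at hQ
      rw [h2 cM]
      simp only [if_neg hMi, if_neg hMj] at hQ ⊢
      omega
  · have hk : (k : ℕ) ≤ (cM : ℕ) := by
      by_contra hk
      have h := hP k (by omega)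
      rw [h2 k, if_pos rfl] at h
      omega
    refine ⟨fun c hc => ?_, ?_⟩
    · have hci : c ≠ i := Fin.ne_of_val_ne (by omega)
      have hcj : c ≠ j := Fin.ne_of_val_ne (by omega)
      have hck : c ≠ k := Fin.ne_of_val_ne (by omega)
      have h := hP c hc
      rw [h2 c] at h
      rw [h1 c]
      simp only [if_neg hci, if_neg hcj, if_neg hck] at h ⊢
      omega
    · have hMi : cM ≠ i := Fin.ne_of_val_ne (by omega)
      have hMj : cM ≠ j := Fin.ne_of_val_ne (by omega)
      rw [h2 cM] at hQ
      rw [h1 cM]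
      simp only [if_neg hMi, if_neg hMj] at hQ ⊢
      omega

lemma Lmove_PQ_iff {cM : Fin n} {e1 e2 : E n} (h : Lmove e1 e2) : PQ cM e1 ↔ PQ cM e2 := by
  cases h with
  | xy u i j hij h1 h2 =>
      subst h1; subst h2
      exact PQ_iff_of_eq fun c _ => xyd_xy_eq u i j c
  | xzx u i j k hij hjk h1 h2 =>
      subst h1; subst h2
      refine cubic_PQ_iff (u := u) (Fin.lt_def.mp hij) (Fin.lt_def.mp hjk) (fun c => ?_) (fun c => ?_) <;>
        · simp only [xyd_add, xyd_ex, xyd_ez]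
          split_ifs <;> omega
  | yzy u i j k hij hjk h1 h2 =>
      subst h1; subst h2
      refine cubic_PQ_iff (u := u) (Fin.lt_def.mp hij) (Fin.lt_def.mp hjk) (fun c => ?_) (fun c => ?_) <;>
        · simp only [xyd_add, xyd_ey, xyd_ez]
          split_ifs <;> omega
  | yzx u i j k hij hjk h1 h2 =>
      subst h1; subst h2
      refine cubic_PQ_iff (u := u) (Fin.lt_def.mp hij) (Fin.lt_def.mp hjk) (fun c => ?_) (fun c => ?_) <;>
        · simp only [xyd_add, xyd_ex, xyd_ey, xyd_ez]
          split_ifs <;> omega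

lemma Imove_PQ_iff {cM : Fin n} {e1 e2 : E n} (h : Imove ((cM : ℕ) + 2) e1 e2) :
    PQ cM e1 ↔ PQ cM e2 := by
  cases h with
  | xy u i j hij hj h1 h2 =>
      subst h1; subst h2
      exact PQ_iff_of_eq fun c _ => xyd_xy_eq u i j c
  | xz u i j hij hj h1 h2 =>
      subst h1; subst h2
      have hij' := Fin.lt_def.mp hij
      refine PQ_iff_of_eq fun c hc => ?_
      have hci : c ≠ i := Fin.ne_of_val_ne (by omega)
      have hcj : c ≠ j := Fin.ne_of_val_ne (by omega)
      simp only [xyd_add, xyd_ex, xyd_ez, if_neg hci, if_neg hcj]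
  | yz u i j hij hj h1 h2 =>
      subst h1; subst h2
      have hij' := Fin.lt_def.mp hij
      refine PQ_iff_of_eq fun c hc => ?_
      have hci : c ≠ i := Fin.ne_of_val_ne (by omega)
      have hcj : c ≠ j := Fin.ne_of_val_ne (by omega)
      simp only [xyd_add, xyd_ey, xyd_ez, if_neg hci, if_neg hcj]

lemma Lmove_to_Imove {cM : Fin n} {e1 e2 : E n} (h : Lmove e1 e2) (hpq : PQ cM e1) :
    Imove ((cM : ℕ) + 2) e1 e2 := by
  obtain ⟨hP, hQ⟩ := hpq
  cases h with
  | xy u i j hij h1 h2 =>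
      have hj : (j : ℕ) ≤ (cM : ℕ) := by
        by_contra hj
        have h := hP j (by omega)
        rw [h1] at h
        simp only [xyd_add, xyd_ex, xyd_ey, if_true] at h
        omega
      exact Imove.xy _ _ u i j hij (by omega) h1 h2
  | xzx u i j k hij hjk h1 h2 =>
      have hk : (k : ℕ) ≤ (cM : ℕ) := by
        by_contra hk
        have h := hP k (by omega)
        rw [h1] at h
        simp only [xyd_add, xyd_ex, xyd_ez, if_true] at h
        omega
      have hjk' := Fin.lt_def.mp hjk
      refine Imove.xz _ _ (u + ex k) i j hij (by omega) ?_ ?_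
      · rw [h1]; abel
      · rw [h2]; abel
  | yzy u i j k hij hjk h1 h2 =>
      have hk : (k : ℕ) ≤ (cM : ℕ) := by
        by_contra hk
        have h := hP k (by omega)
        rw [h1] at h
        simp only [xyd_add, xyd_ey, xyd_ez, if_true] at h
        omega
      have hjk' := Fin.lt_def.mp hjk
      refine Imove.yz _ _ (u + ey k) i j hij (by omega) ?_ ?_
      · rw [h1]; abel
      · rw [h2]; abel
  | yzx u i j k hij hjk h1 h2 =>
      have hk : (k : ℕ) ≤ (cM : ℕ) := by
        by_contra hk
        have h := hP k (by omega)
        rw [h1] at h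
        simp only [xyd_add, xyd_ex, xyd_ey, xyd_ez, if_true] at h
        omega
      have hjk' := Fin.lt_def.mp hjk
      refine Imove.yz _ _ (u + ex k) i j hij (by omega) ?_ ?_
      · rw [h1]; abel
      · rw [h2]; abel

lemma Imove_to_Lequiv {cM : Fin n} {e1 e2 : E n} (h : Imove ((cM : ℕ) + 2) e1 e2)
    (hpq : PQ cM e1) : Relation.EqvGen Lmove e1 e2 := by
  obtain ⟨hP, hQ⟩ := hpq
  cases h with
  | xy u i j hij hj h1 h2 =>
      exact Relation.EqvGen.rel _ _ (Lmove.xy _ _ u i j hij h1 h2)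
  | xz u i j hij hj h1 h2 =>
      subst h1; subst h2
      have hij' := Fin.lt_def.mp hij
      have hMi : cM ≠ i := Fin.ne_of_val_ne (by omega)
      have hMj : cM ≠ j := Fin.ne_of_val_ne (by omega)
      have hicM : i < cM := Fin.lt_def.mpr (by omega)
      have hjcM : j < cM := Fin.lt_def.mpr (by omega)
      simp only [xyd_add, xyd_ex, xyd_ez, if_neg hMi, add_zero] at hQ
      simp only [xyd] at hQ
      have hcase : u (cM, 0) ≠ 0 ∨ u (cM, 1) ≠ 0 := by omega
      rcases hcase with hx | hy
      · obtain ⟨u', hu⟩ := exists_add_single hx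
        have hu' : u = u' + ex cM := hu
        subst hu'
        refine Relation.EqvGen.rel _ _ (Lmove.xzx _ _ u' i j cM hij hjcM ?_ ?_) <;> abel
      · obtain ⟨u', hu⟩ := exists_add_single hy
        have hu' : u = u' + ey cM := hu
        subst hu'
        have m1 : Lmove (u' + ey cM + ex i + ez j) (u' + ez j + ex cM + ey i) :=
          Lmove.xy _ _ (u' + ez j) i cM hicM (by abel) (by abel)
        have m2 : Lmove (u' + ez j + ex cM + ey i) (u' + ez i + ey j + ex cM) :=
          Lmove.yzx _ _ u' i j cM hij hjcM (by abel) (by abel)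
        have m3 : Lmove (u' + ey cM + ex j + ez i) (u' + ez i + ey j + ex cM) :=
          Lmove.xy _ _ (u' + ez i) j cM hjcM (by abel) (by abel)
        exact Relation.EqvGen.trans _ _ _ (Relation.EqvGen.rel _ _ m1)
          (Relation.EqvGen.trans _ _ _ (Relation.EqvGen.rel _ _ m2)
            (Relation.EqvGen.symm _ _ (Relation.EqvGen.rel _ _ m3)))
  | yz u i j hij hj h1 h2 =>
      subst h1; subst h2
      have hij' := Fin.lt_def.mp hij
      have hMi : cM ≠ i := Fin.ne_of_val_ne (by omega)
      have hMj : cM ≠ j := Fin.ne_of_val_ne (by omega)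
      have hicM : i < cM := Fin.lt_def.mpr (by omega)
      have hjcM : j < cM := Fin.lt_def.mpr (by omega)
      simp only [xyd_add, xyd_ey, xyd_ez, if_neg hMi, add_zero] at hQ
      simp only [xyd] at hQ
      have hcase : u (cM, 0) ≠ 0 ∨ u (cM, 1) ≠ 0 := by omega
      rcases hcase with hx | hy
      · obtain ⟨u', hu⟩ := exists_add_single hx
        have hu' : u = u' + ex cM := hu
        subst hu'
        refine Relation.EqvGen.rel _ _ (Lmove.yzx _ _ u' i j cM hij hjcM ?_ ?_) <;> abel
      · obtain ⟨u', hu⟩ := exists_add_single hy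
        have hu' : u = u' + ey cM := hu
        subst hu'
        refine Relation.EqvGen.rel _ _ (Lmove.yzy _ _ u' i j cM hij hjcM ?_ ?_) <;> abel

lemma Lmove_not_R1 {e1 e2 : E n} (h : Lmove e1 e2) : ¬ R1 e1 ∧ ¬ R1 e2 := by
  cases h with
  | xy u i j hij h1 h2 =>
      subst h1; subst h2
      have hij' := Fin.lt_def.mp hij
      refine ⟨fun hr => ?_, fun hr => ?_⟩ <;>
      · have h := hr j (by omega)
        simp only [xyd_add, xyd_ex, xyd_ey, if_true] at h
        omega
  | xzx u i j k hij hjk h1 h2 =>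
      subst h1; subst h2
      have hij' := Fin.lt_def.mp hij
      have hjk' := Fin.lt_def.mp hjk
      refine ⟨fun hr => ?_, fun hr => ?_⟩ <;>
      · have h := hr k (by omega)
        simp only [xyd_add, xyd_ex, xyd_ez, if_true] at h
        omega
  | yzy u i j k hij hjk h1 h2 =>
      subst h1; subst h2
      have hij' := Fin.lt_def.mp hij
      have hjk' := Fin.lt_def.mp hjk
      refine ⟨fun hr => ?_, fun hr => ?_⟩ <;>
      · have h := hr k (by omega)
        simp only [xyd_add, xyd_ey, xyd_ez, if_true] at h
        omega
  | yzx u i j k hij hjk h1 h2 =>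
      subst h1; subst h2
      have hij' := Fin.lt_def.mp hij
      have hjk' := Fin.lt_def.mp hjk
      refine ⟨fun hr => ?_, fun hr => ?_⟩ <;>
      · have h := hr k (by omega)
        simp only [xyd_add, xyd_ex, xyd_ey, xyd_ez, if_true] at h
        omega

lemma Imove3_not_R1 {e1 e2 : E n} (h : Imove 3 e1 e2) : ¬ R1 e1 ∧ ¬ R1 e2 := by
  cases h with
  | xy u i j hij hj h1 h2 =>
      subst h1; subst h2
      have hij' := Fin.lt_def.mp hij
      refine ⟨fun hr => ?_, fun hr => ?_⟩ <;>
      · have h := hr j (by omega)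
        simp only [xyd_add, xyd_ex, xyd_ey, if_true] at h
        omega
  | xz u i j hij hj h1 h2 =>
      have hij' := Fin.lt_def.mp hij
      exact absurd hj (by omega)
  | yz u i j hij hj h1 h2 =>
      have hij' := Fin.lt_def.mp hij
      exact absurd hj (by omega)

lemma class_eq_main {cM : Fin n} {d : E n} (hPQ : PQ cM d) (e : E n) :
    Relation.EqvGen Lmove e d ↔ Relation.EqvGen (Imove ((cM : ℕ) + 2)) e d := by
  constructor
  · intro h
    have hpe : PQ cM e := (eqvGen_iff_inv (fun a b hm => Lmove_PQ_iff hm) h).mpr hPQ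
    exact eqvGen_map_inv (fun a b hm => Lmove_PQ_iff hm)
      (fun a b hm ha => Relation.EqvGen.rel _ _ (Lmove_to_Imove hm ha)) h hpe
  · intro h
    have hpe : PQ cM e := (eqvGen_iff_inv (fun a b hm => Imove_PQ_iff hm) h).mpr hPQ
    exact eqvGen_map_inv (fun a b hm => Imove_PQ_iff hm)
      (fun a b hm ha => Imove_to_Lequiv hm ha) h hpe

lemma class_eq_degen {d : E n} (hR : R1 d) (e : E n) :
    Relation.EqvGen Lmove e d ↔ Relation.EqvGen (Imove 3) e d := by
  constructor <;> intro h
  · have hde : d = e := eqvGen_singleton (R := Lmove) (fun a b hm => (Lmove_not_R1 hm).1)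
      (fun a b hm => (Lmove_not_R1 hm).2) (Relation.EqvGen.symm _ _ h) hR
    rw [← hde]
    exact Relation.EqvGen.refl d
  · have hde : d = e := eqvGen_singleton (R := Imove 3) (fun a b hm => (Imove3_not_R1 hm).1)
      (fun a b hm => (Imove3_not_R1 hm).2) (Relation.EqvGen.symm _ _ h) hR
    rw [← hde]
    exact Relation.EqvGen.refl d

/-- Choice of the detecting component `t` for the class of `d`. -/
lemma key_t (hn : 3 ≤ n) (d : E n) :
    ∃ t : ℕ, 3 ≤ t ∧ t ≤ n + 1 ∧
      (∀ e : E n, Relation.EqvGen Lmove e d ↔ Relation.EqvGen (Imove t) e d) ∧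
      (∀ e : E n, Relation.EqvGen (Imove t) e d →
        ∀ i : Fin n, t ≤ (i : ℕ) + 1 → xyd e i = 0) := by
  by_cases hR : R1 d
  · refine ⟨3, le_rfl, by omega, class_eq_degen hR, ?_⟩
    intro e he i hi
    have hde : d = e := eqvGen_singleton (R := Imove 3) (fun a b hm => (Imove3_not_R1 hm).1)
      (fun a b hm => (Imove3_not_R1 hm).2) (Relation.EqvGen.symm _ _ he) hR
    rw [← hde]
    exact hR i (by omega)
  · simp only [R1, not_forall] at hR
    obtain ⟨c0, hc0pos, hc0⟩ := hR
    have hT : (Finset.univ.filter (fun c : Fin n => xyd d c ≠ 0)).Nonempty :=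
      ⟨c0, Finset.mem_filter.mpr ⟨Finset.mem_univ _, hc0⟩⟩
    obtain ⟨cM, hcM, hmax⟩ := Finset.exists_max_image _ (fun c : Fin n => (c : ℕ)) hT
    have hcMne : xyd d cM ≠ 0 := (Finset.mem_filter.mp hcM).2
    have hc0le : (c0 : ℕ) ≤ (cM : ℕ) :=
      hmax c0 (Finset.mem_filter.mpr ⟨Finset.mem_univ _, hc0⟩)
    have hPQ : PQ cM d := by
      refine ⟨fun c hc => ?_, Nat.pos_of_ne_zero hcMne⟩
      by_contra hcne
      have : (c : ℕ) ≤ (cM : ℕ) :=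
        hmax c (Finset.mem_filter.mpr ⟨Finset.mem_univ _, hcne⟩)
      omega
    refine ⟨(cM : ℕ) + 2, by omega, by have := cM.isLt; omega, class_eq_main hPQ, ?_⟩
    intro e he i hi
    have hpe : PQ cM e := (eqvGen_iff_inv (fun a b hm => Imove_PQ_iff hm) he).mpr hPQ
    exact hpe.1 i (by omega)

lemma phi_I_zero {t : ℕ} {d : E n}
    (habs : ∀ e : E n, Relation.EqvGen (Imove t) e d →
      ∀ i : Fin n, t ≤ (i : ℕ) + 1 → xyd e i = 0)
    {f : MvPolynomial (Fin n × Fin 3) K} (hf : f ∈ Iideal K n t) :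
    phiH (fun e : E n => Relation.EqvGen (Imove t) e d) f = 0 := by
  set P : E n → Prop := fun e => Relation.EqvGen (Imove t) e d with hPdef
  rw [Iideal] at hf
  refine phiH_span_zero P ?_ hf
  have hmono : ∀ (u A : E n) (c : K), ¬ P (u + A) →
      phiH P (MvPolynomial.monomial u c * Xm A) = 0 := by
    intro u A c hA
    rw [Xm, MvPolynomial.monomial_mul, phiH_monomial, if_neg hA]
  have hbin : ∀ (u A B : E n) (c : K), Imove t (u + A) (u + B) →
      phiH P (MvPolynomial.monomial u c * (Xm A - Xm B)) = 0 := by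
    intro u A B c mv
    have hiff : P (u + A) ↔ P (u + B) :=
      ⟨fun h => Relation.EqvGen.trans _ _ _
          (Relation.EqvGen.symm _ _ (Relation.EqvGen.rel _ _ mv)) h,
       fun h => Relation.EqvGen.trans _ _ _ (Relation.EqvGen.rel _ _ mv) h⟩
    rw [mul_sub, Xm, Xm, MvPolynomial.monomial_mul, MvPolynomial.monomial_mul, map_sub,
      phiH_monomial, phiH_monomial]
    simp only [hiff]
    exact sub_self _
  rintro g hg u c
  simp only [Set.mem_union, Set.mem_setOf_eq] at hg
  rcases hg with (⟨i, hi, hx | hy⟩ | ⟨i, j, hij, hj, hm⟩) | ⟨i, j, hij, hj, hxz | hyz⟩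
  · subst hx
    rw [Xv_eq]
    refine hmono u (ex i) c ?_
    intro hP'
    have h0 := habs _ hP' i hi
    simp only [xyd_add, xyd_ex, if_true] at h0
    omega
  · subst hy
    rw [Yv_eq]
    refine hmono u (ey i) c ?_
    intro hP'
    have h0 := habs _ hP' i hi
    simp only [xyd_add, xyd_ey, if_true] at h0
    omega
  · subst hm
    rw [XY_eq, XY_eq]
    exact hbin u _ _ c (Imove.xy _ _ u i j hij hj (by abel) (by abel))
  · subst hxz
    rw [XZ_eq, XZ_eq]
    exact hbin u _ _ c (Imove.xz _ _ u i j hij hj (by abel) (by abel))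
  · subst hyz
    rw [YZ_eq, YZ_eq]
    exact hbin u _ _ c (Imove.yz _ _ u i j hij hj (by abel) (by abel))

lemma memL_of_sums {f : MvPolynomial (Fin n × Fin 3) K}
    (h : ∀ d : E n, ∑ e ∈ f.support.filter (fun e => Relation.EqvGen Lmove e d),
      MvPolynomial.coeff e f = 0) : f ∈ Lideal K n := by
  suffices H : ∀ (N : ℕ) (f : MvPolynomial (Fin n × Fin 3) K), f.support.card ≤ N →
      (∀ d : E n, ∑ e ∈ f.support.filter (fun e => Relation.EqvGen Lmove e d),
        MvPolynomial.coeff e f = 0) → f ∈ Lideal K n from H _ f le_rfl h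
  clear h f
  intro N
  induction N with
  | zero =>
    intro f hcard _
    have hf0 : f = 0 := by
      rw [← MvPolynomial.support_eq_empty]
      exact Finset.card_eq_zero.mp (by omega)
    exact hf0 ▸ (Lideal K n).zero_mem
  | succ N ih =>
    intro f hcard hsum
    by_cases hf0 : f = 0
    · exact hf0 ▸ (Lideal K n).zero_mem
    have hne : f.support.Nonempty := MvPolynomial.support_nonempty.mpr hf0
    obtain ⟨d, hd⟩ := hne
    have hdc : MvPolynomial.coeff d f ≠ 0 := MvPolynomial.mem_support_iff.mp hd
    have hdF : d ∈ f.support.filter (fun e => Relation.EqvGen Lmove e d) :=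
      Finset.mem_filter.mpr ⟨hd, Relation.EqvGen.refl d⟩
    have hex : ∃ e ∈ f.support.filter (fun e => Relation.EqvGen Lmove e d), e ≠ d := by
      by_contra hex
      push_neg at hex
      have hsingle : f.support.filter (fun e => Relation.EqvGen Lmove e d) = {d} :=
        Finset.eq_singleton_iff_unique_mem.mpr ⟨hdF, fun x hx => hex x hx⟩
      have h0 := hsum d
      rw [hsingle, Finset.sum_singleton] at h0
      exact hdc h0
    obtain ⟨e, heF, hed⟩ := hex
    have hLde : Relation.EqvGen Lmove e d := (Finset.mem_filter.mp heF).2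
    have heS : e ∈ f.support := (Finset.mem_filter.mp heF).1
    set c := MvPolynomial.coeff d f with hc
    set g := f - (MvPolynomial.monomial d c - MvPolynomial.monomial e c) with hg
    have hgco : ∀ a : E n, MvPolynomial.coeff a g = MvPolynomial.coeff a f -
        ((if d = a then c else 0) - (if e = a then c else 0)) := by
      intro a
      rw [hg]
      simp [MvPolynomial.coeff_sub, MvPolynomial.coeff_monomial]
    have hbinmem : (MvPolynomial.monomial d c - MvPolynomial.monomial e c :
        MvPolynomial (Fin n × Fin 3) K) ∈ Lideal K n := by
      have h1 : (Xm d : MvPolynomial (Fin n × Fin 3) K) - Xm e ∈ Lideal K n :=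
        sub_mem_of_eqvGen (fun a b hm => hm.sub_mem) (Relation.EqvGen.symm _ _ hLde)
      have h2 := Ideal.mul_mem_left _ (MvPolynomial.C c) h1
      convert h2 using 1
      rw [Xm, Xm, mul_sub, MvPolynomial.C_mul_monomial, MvPolynomial.C_mul_monomial, mul_one]
    have hsub : g.support ⊆ f.support.erase d := by
      intro a ha
      have hga : MvPolynomial.coeff a g ≠ 0 := MvPolynomial.mem_support_iff.mp ha
      have had : a ≠ d := by
        rintro rfl
        apply hga
        rw [hgco a, if_pos rfl, if_neg hed]
        ring
      rw [Finset.mem_erase]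
      refine ⟨had, ?_⟩
      rcases eq_or_ne a e with rfl | hae
      · exact heS
      · by_contra h'
        apply hga
        have hfa : MvPolynomial.coeff a f = 0 := MvPolynomial.notMem_support_iff.mp h'
        rw [hgco a, hfa, if_neg (Ne.symm had), if_neg (Ne.symm hae)]
        ring
    have hfg : f = g + (MvPolynomial.monomial d c - MvPolynomial.monomial e c) := by
      rw [hg]; ring
    rw [hfg]
    refine (Lideal K n).add_mem ?_ hbinmem
    apply ih
    · calc g.support.card ≤ (f.support.erase d).card := Finset.card_le_card hsub
        _ = f.support.card - 1 := Finset.card_erase_of_mem hd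
        _ ≤ N := by omega
    · intro d'
      have hsubf : g.support.filter (fun e' => Relation.EqvGen Lmove e' d') ⊆
          f.support.filter (fun e' => Relation.EqvGen Lmove e' d') :=
        Finset.filter_subset_filter _ (hsub.trans (Finset.erase_subset _ _))
      have hzero : ∀ a ∈ f.support.filter (fun e' => Relation.EqvGen Lmove e' d'),
          a ∉ g.support.filter (fun e' => Relation.EqvGen Lmove e' d') →
          MvPolynomial.coeff a g = 0 := by
        intro a haF hag
        by_contra h'
        exact hag (Finset.mem_filter.mpr ⟨MvPolynomial.mem_support_iff.mpr h',
          (Finset.mem_filter.mp haF).2⟩)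
      rw [Finset.sum_subset hsubf hzero]
      simp only [hgco]
      rw [Finset.sum_sub_distrib, Finset.sum_sub_distrib, hsum d',
        Finset.sum_ite_eq _ d (fun _ => c), Finset.sum_ite_eq _ e (fun _ => c)]
      have hiff : (d ∈ f.support.filter (fun e' => Relation.EqvGen Lmove e' d')) ↔
          (e ∈ f.support.filter (fun e' => Relation.EqvGen Lmove e' d')) := by
        simp only [Finset.mem_filter]
        constructor
        · rintro ⟨_, hdd'⟩
          exact ⟨heS, Relation.EqvGen.trans _ _ _ hLde hdd'⟩
        · rintro ⟨_, hed'⟩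
          exact ⟨hd, Relation.EqvGen.trans _ _ _ (Relation.EqvGen.symm _ _ hLde) hed'⟩
      rw [if_congr hiff rfl rfl]
      ring

lemma Xv_mem {t : ℕ} {i : Fin n} (hi : t ≤ (i : ℕ) + 1) : Xv K n i ∈ Iideal K n t := by
  rw [Iideal]
  apply Ideal.subset_span
  simp only [Set.mem_union, Set.mem_setOf_eq]
  exact Or.inl (Or.inl ⟨i, hi, Or.inl rfl⟩)

lemma Yv_mem {t : ℕ} {i : Fin n} (hi : t ≤ (i : ℕ) + 1) : Yv K n i ∈ Iideal K n t := by
  rw [Iideal]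
  apply Ideal.subset_span
  simp only [Set.mem_union, Set.mem_setOf_eq]
  exact Or.inl (Or.inl ⟨i, hi, Or.inr rfl⟩)

lemma minor_mem {t : ℕ} {i j : Fin n} (hij : i < j) (hj : (j : ℕ) + 1 < t) :
    Xv K n i * Yv K n j - Xv K n j * Yv K n i ∈ Iideal K n t := by
  rw [Iideal]
  apply Ideal.subset_span
  simp only [Set.mem_union, Set.mem_setOf_eq]
  exact Or.inl (Or.inr ⟨i, j, hij, hj, rfl⟩)

lemma xz_mem {t : ℕ} {i j : Fin n} (hij : i < j) (hj : (j : ℕ) + 1 < t - 1) :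
    Xv K n i * Zv K n j - Xv K n j * Zv K n i ∈ Iideal K n t := by
  rw [Iideal]
  apply Ideal.subset_span
  simp only [Set.mem_union, Set.mem_setOf_eq]
  exact Or.inr ⟨i, j, hij, hj, Or.inl rfl⟩

lemma yz_mem {t : ℕ} {i j : Fin n} (hij : i < j) (hj : (j : ℕ) + 1 < t - 1) :
    Yv K n i * Zv K n j - Yv K n j * Zv K n i ∈ Iideal K n t := by
  rw [Iideal]
  apply Ideal.subset_span
  simp only [Set.mem_union, Set.mem_setOf_eq]
  exact Or.inr ⟨i, j, hij, hj, Or.inr rfl⟩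

end Stmt4Aux

/-- `L_n = I_3 ∩ I_4 ∩ ⋯ ∩ I_{n+1}`. -/
theorem stmt4 (hn : 3 ≤ n) :
    Lideal K n = ⨅ t ∈ Finset.Icc 3 (n + 1), Iideal K n t := by
  classical
  open Stmt4Aux in
  have hmem : ∀ p : MvPolynomial (Fin n × Fin 3) K,
      p ∈ (⨅ t ∈ Finset.Icc 3 (n + 1), Iideal K n t) ↔
        ∀ t ∈ Finset.Icc 3 (n + 1), p ∈ Iideal K n t := by
    intro p
    simp only [Ideal.mem_iInf]
  refine le_antisymm ?_ ?_
  · rw [Lideal, Ideal.span_le]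
    rintro p hp
    rw [SetLike.mem_coe, hmem p]
    intro t ht
    rw [Finset.mem_Icc] at ht
    simp only [Set.mem_union, Set.mem_setOf_eq] at hp
    rcases hp with (((⟨i, j, hij, rfl⟩ | ⟨i, j, k, hij, hjk, rfl⟩) |
      ⟨i, j, k, hij, hjk, rfl⟩) | ⟨i, j, k, hij, hjk, rfl⟩)
    · by_cases hj : (j : ℕ) + 1 < t
      · exact minor_mem hij hj
      · push_neg at hj
        exact sub_mem (Ideal.mul_mem_left _ _ (Yv_mem hj))
          (Ideal.mul_mem_right _ _ (Xv_mem hj))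
    · by_cases hk : t ≤ (k : ℕ) + 1
      · exact sub_mem (Ideal.mul_mem_left _ _ (Xv_mem hk))
          (Ideal.mul_mem_left _ _ (Xv_mem hk))
      · push_neg at hk
        have hjk' := Fin.lt_def.mp hjk
        have hg := xz_mem (K := K) hij (t := t) (by omega)
        have h2 := Ideal.mul_mem_right (Xv K n k) _ hg
        convert h2 using 1
        ring
    · by_cases hk : t ≤ (k : ℕ) + 1
      · exact sub_mem (Ideal.mul_mem_left _ _ (Yv_mem hk))
          (Ideal.mul_mem_left _ _ (Yv_mem hk))
      · push_neg at hk
        have hjk' := Fin.lt_def.mp hjk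
        have hg := yz_mem (K := K) hij (t := t) (by omega)
        have h2 := Ideal.mul_mem_right (Yv K n k) _ hg
        convert h2 using 1
        ring
    · by_cases hk : t ≤ (k : ℕ) + 1
      · exact sub_mem (Ideal.mul_mem_left _ _ (Xv_mem hk))
          (Ideal.mul_mem_left _ _ (Xv_mem hk))
      · push_neg at hk
        have hjk' := Fin.lt_def.mp hjk
        have hg := yz_mem (K := K) hij (t := t) (by omega)
        have h2 := Ideal.mul_mem_right (Xv K n k) _ hg
        convert h2 using 1
        ring
  · intro f hf
    rw [hmem f] at hf
    apply memL_of_sums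
    intro d
    obtain ⟨t, ht3, htn, hclass, habs⟩ := key_t hn d
    have hft : f ∈ Iideal K n t := hf t (Finset.mem_Icc.mpr ⟨ht3, htn⟩)
    have hphi := phi_I_zero habs hft
    rw [phiH_eq_sum_filter] at hphi
    rw [← hphi]
    refine Finset.sum_congr ?_ (fun _ _ => rfl)
    refine Finset.filter_congr ?_
    intro e _
    simpa using hclass e

end
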